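/- With A and p_U as in the previous statement, p_U is prime: for all f, g ∈ A, either max(f - g, 0) ∈ p_U or max(g - f, 0) ∈ p_U (where truncated subtraction is pointwise). -/

import Mathlib

open Filter Topology Set

noncomputable section

/-- Functions `[0,1]^n → [0,1]` generated from coordinate projections by the
Łukasiewicz operations `¬x = 1 - x` and `x ⊕ y = min 1 (x + y)`. -/
inductive Luk (n : ℕ) : ((Fin n → ℝ) → ℝ) → Prop
  | proj (i : Fin n) : Luk n (fun x => x i)
  | neg {f : (Fin n → ℝ) → ℝ} : Luk n f → Luk n (fun x => 1 - f x)
  | oplus {f g : (Fin n → ℝ) → ℝ} : Luk n f → Luk n g →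
      Luk n (fun x => min 1 (f x + g x))

/-- The unit cube `[0,1]^n`. -/
def cube (n : ℕ) : Set (Fin n → ℝ) := {x | ∀ i, x i ∈ Set.Icc (0:ℝ) 1}

/-- Euclidean dot product on `ℝ^n`. -/
def dot {n : ℕ} (u v : Fin n → ℝ) : ℝ := ∑ k, u k * v k

/-- Vertices of the simplex `T_{U,m}`: the partial sums `u₀ + Σ_{i<j} u_i/m^{i+1}`. -/
def vert {n t : ℕ} (u0 : Fin n → ℝ) (u : Fin t → Fin n → ℝ) (m : ℕ) (j : Fin (t+1)) :
    Fin n → ℝ :=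
  u0 + ∑ i ∈ Finset.filter (fun i : Fin t => (i : ℕ) < (j : ℕ)) Finset.univ,
    ((m : ℝ) ^ ((i : ℕ) + 1))⁻¹ • u i

/-- The simplex `T_{U,m}`. -/
def Tsimp {n t : ℕ} (u0 : Fin n → ℝ) (u : Fin t → Fin n → ℝ) (m : ℕ) :
    Set (Fin n → ℝ) :=
  convexHull ℝ (Set.range (vert u0 u m))

/-- `U = (u₀,…,u_t)` is a differential valuation: `u₁,…,u_t` are pairwise orthogonal
unit vectors and `T_{U,m} ⊆ [0,1]^n` for all large `m`. -/
def DVal {n t : ℕ} (u0 : Fin n → ℝ) (u : Fin t → Fin n → ℝ) : Prop :=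
  (∀ i, dot (u i) (u i) = 1) ∧ (∀ i j, i ≠ j → dot (u i) (u j) = 0) ∧
    ∃ M : ℕ, 1 ≤ M ∧ ∀ m, M ≤ m → Tsimp u0 u m ⊆ cube n

/-- The prime ideal `p_U` of functions vanishing on some `T_{U,m}`. -/
def pU {n t : ℕ} (u0 : Fin n → ℝ) (u : Fin t → Fin n → ℝ) :
    Set ((Fin n → ℝ) → ℝ) :=
  {f | Luk n f ∧ ∃ m : ℕ, 1 ≤ m ∧ ∀ x ∈ Tsimp u0 u m, f x = 0}


section Aux

variable {n t : ℕ}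

lemma dot_linear (c : Fin n → ℝ) : IsLinearMap ℝ (dot c) := by
  constructor
  · intro x y
    simp [dot, Pi.add_apply, mul_add, Finset.sum_add_distrib]
  · intro r x
    simp only [dot, Pi.smul_apply, smul_eq_mul, Finset.mul_sum]
    congr 1; ext k; ring

lemma dot_add_right (c x y : Fin n → ℝ) : dot c (x + y) = dot c x + dot c y :=
  (dot_linear c).map_add x y

lemma dot_smul_right (c : Fin n → ℝ) (r : ℝ) (x : Fin n → ℝ) :
    dot c (r • x) = r * dot c x := (dot_linear c).map_smul r x

lemma dot_sum_right {ι : Type*} (c : Fin n → ℝ) (s : Finset ι) (v : ι → Fin n → ℝ) :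
    dot c (∑ i ∈ s, v i) = ∑ i ∈ s, dot c (v i) := by
  classical
  induction s using Finset.induction_on with
  | empty => simp [dot]
  | insert _ _ h ih => rw [Finset.sum_insert h, Finset.sum_insert h, dot_add_right, ih]

lemma dot_neg_left (c x : Fin n → ℝ) : dot (-c) x = - dot c x := by
  simp [dot, Finset.sum_neg_distrib]

lemma dot_add_left (c c' x : Fin n → ℝ) : dot (c + c') x = dot c x + dot c' x := by
  simp [dot, add_mul, Finset.sum_add_distrib]

lemma dot_sub_left (c c' x : Fin n → ℝ) : dot (c - c') x = dot c x - dot c' x := by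
  simp [dot, sub_mul, Finset.sum_sub_distrib]

/-- Value of the affine function with coefficients `β, α` at vertex `j`, scale `m`. -/
def sval (β : ℝ) (α : Fin t → ℝ) (m : ℕ) (j : Fin (t+1)) : ℝ :=
  β + ∑ i ∈ Finset.filter (fun i : Fin t => (i : ℕ) < (j : ℕ)) Finset.univ,
    ((m : ℝ) ^ ((i : ℕ) + 1))⁻¹ * α i

lemma sval_neg (β : ℝ) (α : Fin t → ℝ) (m : ℕ) (j : Fin (t+1)) :
    sval (-β) (-α) m j = - sval β α m j := by
  simp only [sval, Pi.neg_apply, mul_neg]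
  rw [Finset.sum_neg_distrib]
  ring

lemma sval_nonneg_of (β : ℝ) (α : Fin t → ℝ)
    (h : 0 < β ∨ (β = 0 ∧ ∀ i, α i = 0) ∨
      (β = 0 ∧ ∃ k : Fin t, 0 < α k ∧ ∀ i : Fin t, (i : ℕ) < (k : ℕ) → α i = 0)) :
    ∃ m1 : ℕ, 1 ≤ m1 ∧ ∀ m, m1 ≤ m → ∀ j : Fin (t+1), 0 ≤ sval β α m j := by
  set S : ℝ := ∑ i : Fin t, |α i| with hS
  have hS0 : 0 ≤ S := Finset.sum_nonneg fun i _ => abs_nonneg _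
  rcases h with hβ | ⟨hβ, hall⟩ | ⟨hβ, k, hk, hfirst⟩
  · -- β > 0 dominates
    refine ⟨max 1 (⌈S / β⌉₊ + 1), le_max_left _ _, fun m hm j => ?_⟩
    have hm1 : (1 : ℕ) ≤ m := le_trans (le_max_left _ _) hm
    have hmR : (1 : ℝ) ≤ (m : ℝ) := by exact_mod_cast hm1
    have hmpos : (0 : ℝ) < m := lt_of_lt_of_le one_pos hmR
    have hmS : S / β < m := by
      have : (⌈S / β⌉₊ + 1 : ℕ) ≤ m := le_trans (le_max_right _ _) hm
      have h1 : S / β ≤ (⌈S / β⌉₊ : ℝ) := Nat.le_ceil _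
      have h2 : ((⌈S / β⌉₊ : ℕ) : ℝ) < ((⌈S / β⌉₊ + 1 : ℕ) : ℝ) := by exact_mod_cast Nat.lt_succ_self _
      calc S / β ≤ (⌈S / β⌉₊ : ℝ) := h1
        _ < ((⌈S / β⌉₊ + 1 : ℕ) : ℝ) := h2
        _ ≤ m := by exact_mod_cast this
    have hSm : S < β * m := by
      have := (div_lt_iff₀ hβ).mp hmS
      linarith
    have hbound : ∀ i : Fin t, -( |α i| / m) ≤ ((m : ℝ) ^ ((i : ℕ) + 1))⁻¹ * α i := by
      intro i
      have hp : (1 : ℝ) ≤ (m : ℝ) ^ ((i : ℕ) + 1) := one_le_pow₀ hmR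
      have hppos : (0 : ℝ) < (m : ℝ) ^ ((i : ℕ) + 1) := lt_of_lt_of_le one_pos hp
      have hmono : ((m : ℝ) ^ ((i : ℕ) + 1))⁻¹ ≤ (m : ℝ)⁻¹ := by
        apply inv_anti₀ hmpos
        calc (m : ℝ) = (m : ℝ) ^ 1 := (pow_one _).symm
          _ ≤ (m : ℝ) ^ ((i : ℕ) + 1) := pow_le_pow_right₀ hmR (Nat.succ_le_succ (Nat.zero_le _))
      have h1 : |((m : ℝ) ^ ((i : ℕ) + 1))⁻¹ * α i| ≤ |α i| / m := by
        rw [abs_mul, abs_inv, abs_of_pos hppos, div_eq_inv_mul]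
        gcongr
      linarith [neg_abs_le (((m : ℝ) ^ ((i : ℕ) + 1))⁻¹ * α i), h1]
    have hsum : -(S / m) ≤ ∑ i ∈ Finset.filter (fun i : Fin t => (i : ℕ) < (j : ℕ)) Finset.univ,
        ((m : ℝ) ^ ((i : ℕ) + 1))⁻¹ * α i := by
      have h1 : ∑ i ∈ Finset.filter (fun i : Fin t => (i : ℕ) < (j : ℕ)) Finset.univ,
          (-( |α i| / m)) ≤ ∑ i ∈ Finset.filter (fun i : Fin t => (i : ℕ) < (j : ℕ)) Finset.univ,
          ((m : ℝ) ^ ((i : ℕ) + 1))⁻¹ * α i :=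
        Finset.sum_le_sum fun i _ => hbound i
      have h2 : -(S / m) ≤ ∑ i ∈ Finset.filter (fun i : Fin t => (i : ℕ) < (j : ℕ)) Finset.univ,
          (-( |α i| / m)) := by
        rw [Finset.sum_neg_distrib, neg_le_neg_iff]
        have : ∑ i ∈ Finset.filter (fun i : Fin t => (i : ℕ) < (j : ℕ)) Finset.univ, |α i| / m
            ≤ ∑ i : Fin t, |α i| / m :=
          Finset.sum_le_sum_of_subset_of_nonneg (Finset.filter_subset _ _)
            (fun i _ _ => div_nonneg (abs_nonneg _) (le_of_lt hmpos))
        calc ∑ i ∈ Finset.filter (fun i : Fin t => (i : ℕ) < (j : ℕ)) Finset.univ, |α i| / m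
            ≤ ∑ i : Fin t, |α i| / m := this
          _ = S / m := by rw [hS, Finset.sum_div]
      linarith
    have : S / m < β := (div_lt_iff₀ hmpos).mpr (by linarith [hSm])
    unfold sval; linarith
  · -- everything vanishes
    refine ⟨1, le_refl 1, fun m _ j => ?_⟩
    unfold sval
    rw [hβ, Finset.sum_eq_zero (fun i _ => by rw [hall i, mul_zero]), add_zero]
  · -- first nonzero coefficient is positive
    refine ⟨max 1 (⌈S / α k⌉₊ + 1), le_max_left _ _, fun m hm j => ?_⟩
    have hm1 : (1 : ℕ) ≤ m := le_trans (le_max_left _ _) hm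
    have hmR : (1 : ℝ) ≤ (m : ℝ) := by exact_mod_cast hm1
    have hmpos : (0 : ℝ) < m := lt_of_lt_of_le one_pos hmR
    have hmS : S / α k < m := by
      have h3 : (⌈S / α k⌉₊ + 1 : ℕ) ≤ m := le_trans (le_max_right _ _) hm
      calc S / α k ≤ (⌈S / α k⌉₊ : ℝ) := Nat.le_ceil _
        _ < ((⌈S / α k⌉₊ + 1 : ℕ) : ℝ) := by exact_mod_cast Nat.lt_succ_self _
        _ ≤ m := by exact_mod_cast h3
    have hSm : S < α k * m := by
      have := (div_lt_iff₀ hk).mp hmS; linarith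
    by_cases hjk : (j : ℕ) ≤ (k : ℕ)
    · unfold sval
      rw [hβ, Finset.sum_eq_zero, add_zero]
      intro i hi
      rw [hfirst i (lt_of_lt_of_le (Finset.mem_filter.mp hi).2 hjk), mul_zero]
    · push_neg at hjk
      have hk_mem : k ∈ Finset.filter (fun i : Fin t => (i : ℕ) < (j : ℕ)) Finset.univ :=
        Finset.mem_filter.mpr ⟨Finset.mem_univ _, hjk⟩
      unfold sval
      rw [hβ, zero_add, ← Finset.add_sum_erase _ _ hk_mem]
      have hppos1 : (0 : ℝ) < (m : ℝ) ^ ((k : ℕ) + 1) := pow_pos hmpos _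
      have hppos2 : (0 : ℝ) < (m : ℝ) ^ ((k : ℕ) + 2) := pow_pos hmpos _
      have hterm : ∀ i ∈ (Finset.filter (fun i : Fin t => (i : ℕ) < (j : ℕ))
            Finset.univ).erase k,
          -(|α i| * ((m : ℝ) ^ ((k : ℕ) + 2))⁻¹) ≤ ((m : ℝ) ^ ((i : ℕ) + 1))⁻¹ * α i := by
        intro i hi
        obtain ⟨hik, _⟩ := Finset.mem_erase.mp hi
        rcases lt_trichotomy ((i : ℕ)) ((k : ℕ)) with hlt | heq | hgt
        · rw [hfirst i hlt]
          simp [mul_nonneg (abs_nonneg (α i)) (inv_pos.mpr hppos2).le]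
        · exact absurd (Fin.ext heq) hik
        · have hple : ((m : ℝ) ^ ((i : ℕ) + 1))⁻¹ ≤ ((m : ℝ) ^ ((k : ℕ) + 2))⁻¹ := by
            apply inv_anti₀ hppos2
            exact pow_le_pow_right₀ hmR (by omega)
          have habs : |((m : ℝ) ^ ((i : ℕ) + 1))⁻¹ * α i| ≤ |α i| * ((m : ℝ) ^ ((k : ℕ) + 2))⁻¹ := by
            rw [abs_mul, abs_inv, abs_of_pos (pow_pos hmpos _), mul_comm]
            exact mul_le_mul_of_nonneg_left hple (abs_nonneg _)
          linarith [neg_abs_le (((m : ℝ) ^ ((i : ℕ) + 1))⁻¹ * α i)]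
      have hrest : -(S * ((m : ℝ) ^ ((k : ℕ) + 2))⁻¹) ≤
          ∑ i ∈ (Finset.filter (fun i : Fin t => (i : ℕ) < (j : ℕ)) Finset.univ).erase k,
            ((m : ℝ) ^ ((i : ℕ) + 1))⁻¹ * α i := by
        calc -(S * ((m : ℝ) ^ ((k : ℕ) + 2))⁻¹)
            ≤ -((∑ i ∈ (Finset.filter (fun i : Fin t => (i : ℕ) < (j : ℕ))
                Finset.univ).erase k, |α i|) * ((m : ℝ) ^ ((k : ℕ) + 2))⁻¹) := by
              apply neg_le_neg
              apply mul_le_mul_of_nonneg_right _ (inv_pos.mpr hppos2).le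
              exact Finset.sum_le_sum_of_subset_of_nonneg
                (Finset.subset_univ _) (fun i _ _ => abs_nonneg _)
          _ = ∑ i ∈ (Finset.filter (fun i : Fin t => (i : ℕ) < (j : ℕ))
                Finset.univ).erase k, -(|α i| * ((m : ℝ) ^ ((k : ℕ) + 2))⁻¹) := by
              rw [Finset.sum_neg_distrib, Finset.sum_mul]
          _ ≤ _ := Finset.sum_le_sum hterm
      have h4 : S * (m : ℝ)⁻¹ ≤ α k := by
        rw [← div_eq_mul_inv]
        exact le_of_lt ((div_lt_iff₀ hmpos).mpr (by linarith))
      have hSeq : ((m : ℝ) ^ ((k : ℕ) + 2))⁻¹ = ((m : ℝ) ^ ((k : ℕ) + 1))⁻¹ * (m : ℝ)⁻¹ := by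
        rw [pow_succ, mul_inv]
      have key : S * ((m : ℝ) ^ ((k : ℕ) + 2))⁻¹ ≤ ((m : ℝ) ^ ((k : ℕ) + 1))⁻¹ * α k := by
        rw [hSeq]
        calc S * (((m : ℝ) ^ ((k : ℕ) + 1))⁻¹ * (m : ℝ)⁻¹)
            = ((m : ℝ) ^ ((k : ℕ) + 1))⁻¹ * (S * (m : ℝ)⁻¹) := by ring
          _ ≤ ((m : ℝ) ^ ((k : ℕ) + 1))⁻¹ * α k :=
              mul_le_mul_of_nonneg_left h4 (inv_pos.mpr hppos1).le
      linarith

end Aux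

section Aux2

variable {n t : ℕ}

lemma sval_sign (β : ℝ) (α : Fin t → ℝ) :
    ∃ m1 : ℕ, 1 ≤ m1 ∧
      ((∀ m, m1 ≤ m → ∀ j : Fin (t+1), 0 ≤ sval β α m j) ∨
       (∀ m, m1 ≤ m → ∀ j : Fin (t+1), sval β α m j ≤ 0)) := by
  classical
  have key : (0 < β ∨ (β = 0 ∧ ∀ i, α i = 0) ∨
      (β = 0 ∧ ∃ k : Fin t, 0 < α k ∧ ∀ i : Fin t, (i : ℕ) < (k : ℕ) → α i = 0)) ∨
      (0 < -β ∨ (-β = 0 ∧ ∀ i, (-α) i = 0) ∨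
      (-β = 0 ∧ ∃ k : Fin t, 0 < (-α) k ∧ ∀ i : Fin t, (i : ℕ) < (k : ℕ) → (-α) i = 0)) := by
    rcases lt_trichotomy 0 β with hβ | hβ | hβ
    · exact Or.inl (Or.inl hβ)
    · by_cases hall : ∀ i, α i = 0
      · exact Or.inl (Or.inr (Or.inl ⟨hβ.symm, hall⟩))
      · push_neg at hall
        have hne : (Finset.filter (fun i : Fin t => α i ≠ 0) Finset.univ).Nonempty := by
          obtain ⟨i, hi⟩ := hall
          exact ⟨i, Finset.mem_filter.mpr ⟨Finset.mem_univ _, hi⟩⟩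
        set k := (Finset.filter (fun i : Fin t => α i ≠ 0) Finset.univ).min' hne with hkdef
        have hkne : α k ≠ 0 :=
          (Finset.mem_filter.mp (Finset.min'_mem _ hne)).2
        have hkfirst : ∀ i : Fin t, (i : ℕ) < (k : ℕ) → α i = 0 := by
          intro i hi
          by_contra hne'
          have : k ≤ i := Finset.min'_le _ i (Finset.mem_filter.mpr ⟨Finset.mem_univ _, hne'⟩)
          exact absurd (lt_of_lt_of_le hi this) (lt_irrefl _)
        rcases lt_or_gt_of_ne hkne with hneg | hpos
        · refine Or.inr (Or.inr (Or.inr ⟨by rw [← hβ, neg_zero], k, ?_, ?_⟩))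
          · simpa using hneg
          · intro i hi; simp [hkfirst i hi]
        · exact Or.inl (Or.inr (Or.inr ⟨hβ.symm, k, hpos, hkfirst⟩))
    · exact Or.inr (Or.inl (by linarith))
  rcases key with h | h
  · obtain ⟨m1, hm1, hpos⟩ := sval_nonneg_of β α h
    exact ⟨m1, hm1, Or.inl hpos⟩
  · obtain ⟨m1, hm1, hpos⟩ := sval_nonneg_of (-β) (-α) h
    refine ⟨m1, hm1, Or.inr fun m hm j => ?_⟩
    have := hpos m hm j
    rw [sval_neg] at this
    linarith

lemma dot_vert (c u0 : Fin n → ℝ) (u : Fin t → Fin n → ℝ) (m : ℕ) (j : Fin (t+1)) (b : ℝ) :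
    dot c (vert u0 u m j) + b = sval (dot c u0 + b) (fun i => dot c (u i)) m j := by
  unfold vert sval
  rw [dot_add_right, dot_sum_right]
  have : ∀ i ∈ Finset.filter (fun i : Fin t => (i : ℕ) < (j : ℕ)) Finset.univ,
      dot c (((m : ℝ) ^ ((i : ℕ) + 1))⁻¹ • u i) = ((m : ℝ) ^ ((i : ℕ) + 1))⁻¹ * dot c (u i) :=
    fun i _ => dot_smul_right c _ _
  rw [Finset.sum_congr rfl this]
  ring

lemma affine_sign (u0 : Fin n → ℝ) (u : Fin t → Fin n → ℝ) (c : Fin n → ℝ) (b : ℝ) :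
    ∃ m1 : ℕ, 1 ≤ m1 ∧
      ((∀ m, m1 ≤ m → ∀ x ∈ Tsimp u0 u m, 0 ≤ dot c x + b) ∨
       (∀ m, m1 ≤ m → ∀ x ∈ Tsimp u0 u m, dot c x + b ≤ 0)) := by
  obtain ⟨m1, hm1, hsign⟩ := sval_sign (dot c u0 + b) (fun i => dot c (u i))
  refine ⟨m1, hm1, ?_⟩
  rcases hsign with hpos | hneg
  · left
    intro m hm x hx
    have hconv : Convex ℝ {x : Fin n → ℝ | 0 ≤ dot c x + b} := by
      have : {x : Fin n → ℝ | 0 ≤ dot c x + b} = {x : Fin n → ℝ | -b ≤ dot c x} := by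
        ext x; simp only [Set.mem_setOf_eq]; constructor <;> intro h <;> linarith
      rw [this]
      exact convex_halfSpace_ge (dot_linear c) (-b)
    have hsub : Tsimp u0 u m ⊆ {x : Fin n → ℝ | 0 ≤ dot c x + b} := by
      apply convexHull_min _ hconv
      rintro _ ⟨j, rfl⟩
      show 0 ≤ dot c (vert u0 u m j) + b
      rw [dot_vert]
      exact hpos m hm j
    exact hsub hx
  · right
    intro m hm x hx
    have hconv : Convex ℝ {x : Fin n → ℝ | dot c x + b ≤ 0} := by
      have : {x : Fin n → ℝ | dot c x + b ≤ 0} = {x : Fin n → ℝ | dot c x ≤ -b} := by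
        ext x; simp only [Set.mem_setOf_eq]; constructor <;> intro h <;> linarith
      rw [this]
      exact convex_halfSpace_le (dot_linear c) (-b)
    have hsub : Tsimp u0 u m ⊆ {x : Fin n → ℝ | dot c x + b ≤ 0} := by
      apply convexHull_min _ hconv
      rintro _ ⟨j, rfl⟩
      show dot c (vert u0 u m j) + b ≤ 0
      rw [dot_vert]
      exact hneg m hm j
    exact hsub hx

lemma luk_affine (u0 : Fin n → ℝ) (u : Fin t → Fin n → ℝ)
    {f : (Fin n → ℝ) → ℝ} (hf : Luk n f) :
    ∃ (c : Fin n → ℝ) (b : ℝ) (m0 : ℕ), 1 ≤ m0 ∧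
      ∀ m, m0 ≤ m → ∀ x ∈ Tsimp u0 u m, f x = dot c x + b := by
  induction hf with
  | proj i =>
      refine ⟨fun k => if k = i then 1 else 0, 0, 1, le_refl 1, fun m _ x _ => ?_⟩
      simp [dot, ite_mul, one_mul, zero_mul]
  | neg hf ih =>
      obtain ⟨c, b, m0, hm0, hrep⟩ := ih
      refine ⟨-c, 1 - b, m0, hm0, fun m hm x hx => ?_⟩
      dsimp only
      rw [hrep m hm x hx, dot_neg_left]; ring
  | oplus hf hg ihf ihg =>
      obtain ⟨cf, bf, mf, hmf, hrepf⟩ := ihf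
      obtain ⟨cg, bg, mg, hmg, hrepg⟩ := ihg
      obtain ⟨m1, hm1, hsign⟩ := affine_sign u0 u (cf + cg) (bf + bg - 1)
      rcases hsign with hge | hle
      · refine ⟨0, 1, max (max mf mg) m1, le_trans hm1 (le_max_right _ _),
          fun m hm x hx => ?_⟩
        have h1 := hrepf m (le_trans (le_trans (le_max_left _ _) (le_max_left _ _)) hm) x hx
        have h2 := hrepg m (le_trans (le_trans (le_max_right _ _) (le_max_left _ _)) hm) x hx
        have h3 := hge m (le_trans (le_max_right _ _) hm) x hx
        rw [dot_add_left] at h3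
        have hzero : dot (0 : Fin n → ℝ) x = 0 := by simp [dot]
        dsimp only
        rw [h1, h2, hzero, min_eq_left (by linarith)]
        ring
      · refine ⟨cf + cg, bf + bg, max (max mf mg) m1, le_trans hm1 (le_max_right _ _),
          fun m hm x hx => ?_⟩
        have h1 := hrepf m (le_trans (le_trans (le_max_left _ _) (le_max_left _ _)) hm) x hx
        have h2 := hrepg m (le_trans (le_trans (le_max_right _ _) (le_max_left _ _)) hm) x hx
        have h3 := hle m (le_trans (le_max_right _ _) hm) x hx
        rw [dot_add_left] at h3
        dsimp only
        rw [h1, h2, dot_add_left, min_eq_right (by linarith)]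
        ring

lemma trunc_eq (a b : ℝ) : max (a - b) 0 = 1 - min 1 ((1 - a) + b) := by
  rcases le_total a b with h | h
  · rw [max_eq_right (by linarith), min_eq_left (by linarith)]; ring
  · rw [max_eq_left (by linarith), min_eq_right (by linarith)]; ring

lemma luk_trunc {f g : (Fin n → ℝ) → ℝ} (hf : Luk n f) (hg : Luk n g) :
    Luk n (fun x => max (f x - g x) 0) := by
  have h : (fun x => max (f x - g x) 0) = (fun x => 1 - min 1 ((1 - f x) + g x)) := by
    funext x; exact trunc_eq (f x) (g x)
  rw [h]
  exact Luk.neg (Luk.oplus (Luk.neg hf) hg)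

end Aux2

/-- `p_U` is prime: for truth functions `f, g`, one of the
truncated differences `max (f - g) 0`, `max (g - f) 0` lies in `p_U`. -/
theorem pU_prime {n t : ℕ} (u0 : Fin n → ℝ) (u : Fin t → Fin n → ℝ)
    (hU : DVal u0 u) (f g : (Fin n → ℝ) → ℝ) (hf : Luk n f) (hg : Luk n g) :
    (fun x => max (f x - g x) 0) ∈ pU u0 u ∨
    (fun x => max (g x - f x) 0) ∈ pU u0 u := by
  obtain ⟨cf, bf, mf, hmf, hrepf⟩ := luk_affine u0 u hf
  obtain ⟨cg, bg, mg, hmg, hrepg⟩ := luk_affine u0 u hg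
  obtain ⟨m1, hm1, hsign⟩ := affine_sign u0 u (cf - cg) (bf - bg)
  set m : ℕ := max (max mf mg) m1 with hmdef
  have hmmf : mf ≤ m := le_trans (le_max_left _ _) (le_max_left _ _)
  have hmmg : mg ≤ m := le_trans (le_max_right _ _) (le_max_left _ _)
  have hmm1 : m1 ≤ m := le_max_right _ _
  have hm1m : 1 ≤ m := le_trans hm1 hmm1
  rcases hsign with hge | hle
  · -- `f ≥ g` on `T_m`, so `max (g - f) 0` vanishes there
    right
    refine ⟨luk_trunc hg hf, m, hm1m, fun x hx => ?_⟩
    have h1 := hrepf m hmmf x hx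
    have h2 := hrepg m hmmg x hx
    have h3 := hge m hmm1 x hx
    rw [dot_sub_left] at h3
    dsimp only
    rw [max_eq_right (by linarith)]
  · -- `f ≤ g` on `T_m`, so `max (f - g) 0` vanishes there
    left
    refine ⟨luk_trunc hf hg, m, hm1m, fun x hx => ?_⟩
    have h1 := hrepf m hmmf x hx
    have h2 := hrepg m hmmg x hx
    have h3 := hle m hmm1 x hx
    rw [dot_sub_left] at h3
    dsimp only
    rw [max_eq_right (by linarith)]
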